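/- Let x: [0,∞) → ℝ solve the ODE x' = √(x² - 1 - a² x^{2(1-n)}) with x(0) = t > 1, x'(0) = 0 and a = t^{n-1}√(t²-1) > 0, n ≥ 2. Then x is monotonically increasing, x(s) ≥ t for all s ≥ 0, and the quantity |A|² := n(n-1)(x² - x'² - 1)/x² satisfies |A|² = n(n-1) t^{2(n-1)}(t²-1)/x^{2n} ≤ n(n-1)(t²-1). -/

import Mathlib

open Real

/-- Let `x : [0,∞) → ℝ` solve `x' = √(x² - 1 - a²x^{2(1-n)})` with
`x(0) = t > 1` and `a = t^{n-1}√(t²-1) > 0`, `n ≥ 2`.  Then `x` is monotonically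
increasing on `[0,∞)`, `x(s) ≥ t` for all `s ≥ 0`, and
`|A|² := n(n-1)(x² - x'² - 1)/x²` satisfies
`|A|² = n(n-1)t^{2(n-1)}(t²-1)/x^{2n} ≤ n(n-1)(t²-1)`. -/
theorem stmt_14 (n : ℕ) (hn : 2 ≤ n) (t : ℝ) (ht : 1 < t)
    (a : ℝ) (ha : a = t ^ (n - 1) * Real.sqrt (t^2 - 1))
    (x : ℝ → ℝ) (hx0 : x 0 = t)
    (hode : ∀ s ∈ Set.Ici (0:ℝ),
      HasDerivAt x (Real.sqrt ((x s)^2 - 1 - a^2 * (x s) ^ ((2:ℝ) * (1 - (n:ℝ))))) s) :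
    MonotoneOn x (Set.Ici (0:ℝ)) ∧
    (∀ s ∈ Set.Ici (0:ℝ), t ≤ x s) ∧
    (∀ s ∈ Set.Ici (0:ℝ),
      (n : ℝ) * (n - 1)
          * ((x s)^2 - (Real.sqrt ((x s)^2 - 1 - a^2 * (x s) ^ ((2:ℝ) * (1 - (n:ℝ)))))^2 - 1)
          / (x s)^2
        = (n : ℝ) * (n - 1) * t ^ (2 * (n - 1)) * (t^2 - 1) / (x s) ^ (2 * n) ∧
      (n : ℝ) * (n - 1) * t ^ (2 * (n - 1)) * (t^2 - 1) / (x s) ^ (2 * n)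
        ≤ (n : ℝ) * (n - 1) * (t^2 - 1)) := by

  have ht0 : (0:ℝ) < t := lt_trans one_pos ht
  have ht1 : (0:ℝ) ≤ t^2 - 1 := by nlinarith
  have ha2 : a^2 = t ^ (2*(n-1)) * (t^2 - 1) := by
    rw [ha, mul_pow, Real.sq_sqrt ht1, ← pow_mul, mul_comm (n-1) 2]
  -- monotone
  have hcont : ContinuousOn x (Set.Ici 0) := fun s hs => (hode s hs).continuousAt.continuousWithinAt
  have hmono : MonotoneOn x (Set.Ici (0:ℝ)) := by
    apply monotoneOn_of_deriv_nonneg (convex_Ici 0) hcont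
    · intro s hs
      rw [interior_Ici] at hs
      exact ((hode s (Set.mem_Ici.mpr (le_of_lt (Set.mem_Ioi.mp hs)))).differentiableAt).differentiableWithinAt
    · intro s hs
      rw [interior_Ici] at hs
      rw [(hode s (Set.mem_Ici.mpr (le_of_lt (Set.mem_Ioi.mp hs)))).deriv]
      exact Real.sqrt_nonneg _
  have hge : ∀ s ∈ Set.Ici (0:ℝ), t ≤ x s := by
    intro s hs
    calc t = x 0 := hx0.symm
    _ ≤ x s := hmono (Set.mem_Ici.mpr (le_refl 0)) hs hs
  refine ⟨hmono, hge, ?_⟩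
  intro s hs
  have hxt := hge s hs
  have hx1 : 1 < x s := lt_of_lt_of_le ht hxt
  have hxpos : 0 < x s := lt_trans one_pos hx1
  have hcast : ((2*(n-1) : ℕ) : ℝ) = -((2:ℝ) * (1 - (n:ℝ))) := by
    have : (1:ℕ) ≤ n := le_trans one_le_two hn
    push_cast [this]
    ring
  -- key: a^2 * x^(2(1-n)) = t^(2(n-1)) * (t^2-1) / x^(2(n-1))  (rpow)
  have hxr : (x s) ^ ((2:ℝ) * (1 - (n:ℝ))) = ((x s) ^ (2*(n-1)))⁻¹ := by
    rw [← Real.rpow_natCast (x s) (2*(n-1)), hcast, Real.rpow_neg hxpos.le, inv_inv]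
  have htr : t ^ ((2:ℝ) * (1 - (n:ℝ))) = (t ^ (2*(n-1)))⁻¹ := by
    rw [← Real.rpow_natCast t (2*(n-1)), hcast, Real.rpow_neg ht0.le, inv_inv]
  have hYnn : 0 ≤ (x s)^2 - 1 - a^2 * (x s) ^ ((2:ℝ) * (1 - (n:ℝ))) := by
    have hrle : (x s) ^ ((2:ℝ) * (1 - (n:ℝ))) ≤ t ^ ((2:ℝ) * (1 - (n:ℝ))) := by
      apply Real.rpow_le_rpow_of_nonpos ht0 hxt
      have : (2:ℝ) ≤ (n:ℝ) := by exact_mod_cast hn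
      nlinarith
    have h1 : a^2 * (x s) ^ ((2:ℝ) * (1 - (n:ℝ))) ≤ a^2 * t ^ ((2:ℝ) * (1 - (n:ℝ))) :=
      mul_le_mul_of_nonneg_left hrle (sq_nonneg a)
    have h2 : a^2 * t ^ ((2:ℝ) * (1 - (n:ℝ))) = t^2 - 1 := by
      rw [htr, ha2]
      field_simp
    nlinarith [sq_nonneg (x s), hxt, ht]
  have hsq : (Real.sqrt ((x s)^2 - 1 - a^2 * (x s) ^ ((2:ℝ) * (1 - (n:ℝ)))))^2
      = (x s)^2 - 1 - a^2 * (x s) ^ ((2:ℝ) * (1 - (n:ℝ))) := Real.sq_sqrt hYnn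
  have hxpow : (0:ℝ) < (x s) ^ (2*(n-1)) := pow_pos hxpos _
  have hx2n : (x s) ^ (2*n) = (x s) ^ (2*(n-1)) * (x s)^2 := by
    rw [← pow_add]
    congr 1
    omega
  constructor
  · rw [hsq, ha2, hxr]
    rw [hx2n]
    field_simp
    ring
  · rw [div_le_iff₀ (by positivity : (0:ℝ) < (x s)^(2*n))]
    have hnn : (0:ℝ) ≤ (n:ℝ) * ((n:ℝ) - 1) * (t^2 - 1) := by
      have h2 : (2:ℝ) ≤ (n:ℝ) := by exact_mod_cast hn
      exact mul_nonneg (mul_nonneg (by linarith) (by linarith)) ht1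
    have htx : t ^ (2*(n-1)) ≤ (x s) ^ (2*n) := by
      calc t ^ (2*(n-1)) ≤ t ^ (2*n) := pow_le_pow_right₀ ht.le (by omega)
      _ ≤ (x s) ^ (2*n) := pow_le_pow_left₀ ht0.le hxt _
    calc (n:ℝ) * ((n:ℝ) - 1) * t ^ (2*(n-1)) * (t^2 - 1)
        = ((n:ℝ) * ((n:ℝ) - 1) * (t^2 - 1)) * t ^ (2*(n-1)) := by ring
      _ ≤ ((n:ℝ) * ((n:ℝ) - 1) * (t^2 - 1)) * (x s) ^ (2*n) := mul_le_mul_of_nonneg_left htx hnn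
      _ = (n:ℝ) * ((n:ℝ) - 1) * (t^2 - 1) * (x s) ^ (2*n) := rfl
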